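/- Let K be a field of characteristic p > 0 and let ∂ be a nonzero derivation on K such that ∂^{(p)} = ∂. Then there exists a nonzero x ∈ K with ∂(x) = x. -/

import Mathlib

open Function Polynomial

/-- If `aeval D` of a product `∏ (X - C c)` kills a nonzero vector, then some factor
has a nonzero kernel element, i.e. some `c` in the set is an eigenvalue. -/
lemma exists_factor_kernel {R M : Type*} [CommRing R] [AddCommGroup M] [Module R M]
    (D : Module.End R M) (s : Finset R) :
    ∀ v : M, v ≠ 0 → (Polynomial.aeval D (∏ c ∈ s, (X - C c))) v = 0 →
      ∃ c ∈ s, ∃ y : M, y ≠ 0 ∧ D y = c • y := by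
  classical
  induction s using Finset.induction_on with
  | empty =>
    intro v hv h0
    simp only [Finset.prod_empty, map_one, Module.End.one_apply] at h0
    exact absurd h0 hv
  | insert a t hnotmem ih =>
    intro v hv h0
    rw [Finset.prod_insert hnotmem, map_mul] at h0
    set w := (Polynomial.aeval D (∏ c ∈ t, (X - C c))) v with hw
    by_cases hw0 : w = 0
    · obtain ⟨c, hc, y, hy⟩ := ih v hv hw0
      exact ⟨c, Finset.mem_insert_of_mem hc, y, hy⟩
    · refine ⟨a, Finset.mem_insert_self a t, w, hw0, ?_⟩
      have h1 : (Polynomial.aeval D (X - C a)) w = 0 := by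
        rw [hw, ← Module.End.mul_apply, h0]
      rw [map_sub, aeval_X, aeval_C, LinearMap.sub_apply,
        Module.algebraMap_end_apply, sub_eq_zero] at h1
      exact h1

/-- Over `ZMod p`, `∏_{c} (X - C c) = X ^ p - X`. -/
lemma prod_X_sub_C_zmod (p : ℕ) [Fact p.Prime] :
    (∏ c : ZMod p, (X - C c) : (ZMod p)[X]) = X ^ p - X := by
  have hp := (Fact.out : p.Prime)
  have hmonic : (X ^ p - X : (ZMod p)[X]).Monic := by
    apply Polynomial.monic_X_pow_sub
    calc (X : (ZMod p)[X]).degree ≤ 1 := degree_X_le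
    _ < p := by exact_mod_cast Nat.one_lt_cast.mpr hp.one_lt
  have hcard : Fintype.card (ZMod p) = p := ZMod.card p
  have hroots : (X ^ p - X : (ZMod p)[X]).roots = Finset.univ.val := by
    have := FiniteField.roots_X_pow_card_sub_X (ZMod p)
    rwa [hcard] at this
  have hdeg : (X ^ p - X : (ZMod p)[X]).natDegree = p :=
    FiniteField.X_pow_card_sub_X_natDegree_eq _ hp.one_lt
  have h := prod_multiset_X_sub_C_of_monic_of_roots_card_eq hmonic
    (by rw [hroots, hdeg]; simp)
  rw [hroots] at h
  rw [← h]
  rfl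

/-- For a nonzero derivation `d` on a field `K` of characteristic `p` with `d^{(p)} = d`,
there is a nonzero `x` with `d x = x`. -/
theorem exists_dx_eq_x (p : ℕ) (hp : p.Prime)
    (K : Type*) [Field K] [CharP K p]
    (d : K → K)
    (hadd : ∀ x y : K, d (x + y) = d x + d y)
    (hmul : ∀ x y : K, d (x * y) = x * d y + y * d x)
    (hne : d ≠ 0)
    (hdp : d^[p] = d) :
    ∃ x : K, x ≠ 0 ∧ d x = x := by
  classical
  haveI : Fact p.Prime := ⟨hp⟩
  letI : Algebra (ZMod p) K := ZMod.algebra K p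
  -- basic facts about d
  have hd1 : d 1 = 0 := by
    have h := hmul 1 1
    simp only [one_mul, mul_one] at h
    linear_combination -h
  have hdnat : ∀ (n : ℕ) (x : K), d ((n : K) * x) = (n : K) * d x := by
    intro n
    induction n with
    | zero => intro x; simp [show d 0 = 0 by have := hadd 0 0; simpa using this]
    | succ n ih =>
      intro x
      push_cast
      rw [add_mul, one_mul, hadd, ih, add_mul, one_mul]
  -- the derivation as a `ZMod p`-linear map
  have hsmul : ∀ (c : ZMod p) (x : K), c • x = (ZMod.castHom dvd_rfl K c) * x := fun _ _ => rfl
  let D : K →ₗ[ZMod p] K :=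
    { toFun := d
      map_add' := hadd
      map_smul' := by
        intro c x
        simp only [RingHom.id_apply]
        rw [hsmul, hsmul]
        have : (ZMod.castHom dvd_rfl K c) = ((c.val : ℕ) : K) := by
          rw [ZMod.natCast_val, ZMod.castHom_apply]
        rw [this, hdnat] }
  have hDpow : D ^ p = D := by
    ext x
    rw [Module.End.pow_apply]
    exact congrFun hdp x
  -- the product of all `D - c` vanishes
  have hprod : Polynomial.aeval D (∏ c : ZMod p, (X - C c)) = 0 := by
    rw [prod_X_sub_C_zmod p, map_sub, map_pow, aeval_X, hDpow, sub_self]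
  -- find `a` with `d a ≠ 0`
  obtain ⟨a, ha⟩ : ∃ a, d a ≠ 0 := by
    by_contra h
    push_neg at h
    exact hne (funext fun x => h x)
  -- peel off the factor `c = 0`
  have hsplit : (∏ c : ZMod p, (X - C c) : (ZMod p)[X]) =
      (∏ c ∈ Finset.univ.erase 0, (X - C c)) * (X - C 0) :=
    (Finset.prod_erase_mul _ _ (Finset.mem_univ 0)).symm
  have hkill : (Polynomial.aeval D (∏ c ∈ Finset.univ.erase (0 : ZMod p), (X - C c))) (d a) = 0 := by
    have h0 : (Polynomial.aeval D (∏ c : ZMod p, (X - C c))) a = 0 := by rw [hprod]; rfl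
    rw [hsplit, map_mul, Module.End.mul_apply] at h0
    simp at h0
    exact h0
  obtain ⟨c, hc, y, hy0, hy⟩ := exists_factor_kernel D _ (d a) ha hkill
  have hcne : c ≠ 0 := Finset.ne_of_mem_erase hc
  -- `d y = γ * y` with `γ = cast c`, so `d (y ^ n) = n * γ * y ^ n`
  set γ : K := ZMod.castHom dvd_rfl K c with hγ
  have hdy : d y = γ * y := by rw [← hsmul]; exact hy
  have hpow : ∀ n : ℕ, d (y ^ n) = (n : K) * γ * y ^ n := by
    intro n
    induction n with
    | zero => simpa using hd1
    | succ n ih =>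
      rw [pow_succ, hmul, ih, hdy]
      push_cast
      ring
  refine ⟨y ^ (c⁻¹ : ZMod p).val, pow_ne_zero _ hy0, ?_⟩
  rw [hpow]
  have : (((c⁻¹ : ZMod p).val : ℕ) : K) * γ = 1 := by
    rw [ZMod.natCast_val, ← ZMod.castHom_apply (h := dvd_rfl), hγ, ← map_mul,
      inv_mul_cancel₀ hcne, map_one]
  rw [this, one_mul]
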